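/- The cyclic shift map π on the augmented diagram, defined by π((i,j)) = (i+1,j) for i < n and π((n,j)) = (1,j+1), maps the augmented diagram of μ into the augmented diagram of π(μ) = (μ_n + 1, μ_1, …, μ_{n−1}), and for u ∈ dg'(μ), v ∈ hat-dg(μ): v ∈ arm(u) if and only if π(v) ∈ arm(π(u)). -/
import Mathlib


open Finset

noncomputable section
attribute [local instance] Classical.propDecidable

/-- `u` lies in the column diagram of the composition `μ` (columns `1,…,n`). -/
def dgIn (n : ℕ) (μ : ℕ → ℕ) (u : ℕ × ℕ) : Prop :=
  1 ≤ u.1 ∧ u.1 ≤ n ∧ 1 ≤ u.2 ∧ u.2 ≤ μ u.1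

/-- `u` lies in the augmented diagram of `μ` (row `0` added). -/
def augIn (n : ℕ) (μ : ℕ → ℕ) (u : ℕ × ℕ) : Prop :=
  1 ≤ u.1 ∧ u.1 ≤ n ∧ u.2 ≤ μ u.1

/-- The column diagram of `μ` as a finite set. -/
def dgF (n : ℕ) (μ : ℕ → ℕ) : Finset (ℕ × ℕ) :=
  (Finset.Icc 1 n).biUnion (fun i => (Finset.Icc 1 (μ i)).image (fun j => (i, j)))

/-- The augmented diagram of `μ` as a finite set. -/
def augF (n : ℕ) (μ : ℕ → ℕ) : Finset (ℕ × ℕ) :=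
  (Finset.Icc 1 n).biUnion (fun i => (Finset.Icc 0 (μ i)).image (fun j => (i, j)))

/-- The box directly below `u`. -/
def dbox (u : ℕ × ℕ) : ℕ × ℕ := (u.1, u.2 - 1)

/-- `v` belongs to the arm of `u` (left arm or right arm). -/
def armIn (n : ℕ) (μ : ℕ → ℕ) (u v : ℕ × ℕ) : Prop :=
  (dgIn n μ v ∧ v.2 = u.2 ∧ v.1 < u.1 ∧ μ v.1 ≤ μ u.1) ∨
  (augIn n μ v ∧ v.2 + 1 = u.2 ∧ u.1 < v.1 ∧ μ v.1 < μ u.1)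

/-- The arm of `u` as a finite set. -/
def armF (n : ℕ) (μ : ℕ → ℕ) (u : ℕ × ℕ) : Finset (ℕ × ℕ) :=
  (augF n μ).filter (fun v => armIn n μ u v)

/-- The leg length `l(u) = μ_i - j`. -/
def legLen (μ : ℕ → ℕ) (u : ℕ × ℕ) : ℕ := μ u.1 - u.2

/-- The arm length `a(u) = |arm(u)|`. -/
def armLen (n : ℕ) (μ : ℕ → ℕ) (u : ℕ × ℕ) : ℕ := (armF n μ u).card

/-- Two distinct boxes attack each other: same row, or consecutive rows with
the lower box strictly to the right. -/
def attacks (u v : ℕ × ℕ) : Prop :=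
  u ≠ v ∧ (u.2 = v.2 ∨ (u.2 = v.2 + 1 ∧ u.1 < v.1) ∨ (v.2 = u.2 + 1 ∧ v.1 < u.1))

/-- Reading order: rows top to bottom, right to left within a row. -/
def rlt (u v : ℕ × ℕ) : Prop := v.2 < u.2 ∨ (u.2 = v.2 ∧ v.1 < u.1)

/-- The augmented filling: value `i` in the row-0 box `(i,0)`. -/
def augOf (σ : ℕ × ℕ → ℕ) : ℕ × ℕ → ℕ := fun u => if u.2 = 0 then u.1 else σ u

/-- The (augmented) filling is non-attacking. -/
def NonAttacking (n : ℕ) (μ : ℕ → ℕ) (σh : ℕ × ℕ → ℕ) : Prop :=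
  ∀ u v : ℕ × ℕ, augIn n μ u → augIn n μ v → attacks u v → σh u ≠ σh v

/-- The set of inversions of an augmented filling: attacking pairs,
earlier box (in reading order) having the larger entry. -/
def invF (n : ℕ) (μ : ℕ → ℕ) (σh : ℕ × ℕ → ℕ) : Finset ((ℕ × ℕ) × (ℕ × ℕ)) :=
  ((augF n μ) ×ˢ (augF n μ)).filter
    (fun p => attacks p.1 p.2 ∧ rlt p.1 p.2 ∧ σh p.2 < σh p.1)

/-- The descent set of an augmented filling. -/
def desF (n : ℕ) (μ : ℕ → ℕ) (σh : ℕ × ℕ → ℕ) : Finset (ℕ × ℕ) :=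
  (dgF n μ).filter (fun u => σh (dbox u) < σh u)

/-- maj = sum of `l(u)+1` over descents. -/
def majStat (n : ℕ) (μ : ℕ → ℕ) (σh : ℕ × ℕ → ℕ) : ℕ :=
  ∑ u ∈ desF n μ σh, (legLen μ u + 1)

/-- `χ_{xy} = 1` iff the earlier box in reading order carries the larger entry. -/
def chi (σh : ℕ × ℕ → ℕ) (x y : ℕ × ℕ) : ℕ :=
  if (rlt x y ∧ σh y < σh x) ∨ (rlt y x ∧ σh x < σh y) then 1 else 0

/-- Triples `(u, v, d(u))`, encoded by the pair `(u, v)` with `v ∈ arm(u)`. -/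
def triplesF (n : ℕ) (μ : ℕ → ℕ) : Finset ((ℕ × ℕ) × (ℕ × ℕ)) :=
  ((dgF n μ) ×ˢ (augF n μ)).filter (fun p => armIn n μ p.1 p.2)

/-- Inversion triples: `χ_{uv} + χ_{vw} - χ_{uw} = 1` where `w = d(u)`. -/
def invTriplesF (n : ℕ) (μ : ℕ → ℕ) (σh : ℕ × ℕ → ℕ) : Finset ((ℕ × ℕ) × (ℕ × ℕ)) :=
  (triplesF n μ).filter
    (fun p => chi σh p.1 p.2 + chi σh p.2 (dbox p.1) = chi σh p.1 (dbox p.1) + 1)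

/-- Co-inversion triples: `χ_{uv} + χ_{vw} - χ_{uw} = 0` where `w = d(u)`. -/
def coinvTriplesF (n : ℕ) (μ : ℕ → ℕ) (σh : ℕ × ℕ → ℕ) : Finset ((ℕ × ℕ) × (ℕ × ℕ)) :=
  (triplesF n μ).filter
    (fun p => chi σh p.1 p.2 + chi σh p.2 (dbox p.1) = chi σh p.1 (dbox p.1))

/-- coinv = number of co-inversion triples. -/
def coinvStat (n : ℕ) (μ : ℕ → ℕ) (σh : ℕ × ℕ → ℕ) : ℕ := (coinvTriplesF n μ σh).card

/-- `σ` is a filling of `μ`, i.e. takes values in `[n]` on the diagram. -/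
def IsFilling (n : ℕ) (μ : ℕ → ℕ) (σ : ℕ × ℕ → ℕ) : Prop :=
  ∀ u : ℕ × ℕ, dgIn n μ u → 1 ≤ σ u ∧ σ u ≤ n

/-- `π` on compositions: `π(μ) = (μ_n+1, μ_1, …, μ_{n-1})`. -/
def piComp (n : ℕ) (μ : ℕ → ℕ) : ℕ → ℕ := fun i => if i = 1 then μ n + 1 else μ (i - 1)

/-- `π` on boxes: `(i,j) ↦ (i+1,j)` for `i < n`, `(n,j) ↦ (1,j+1)`. -/
def piBox (n : ℕ) (u : ℕ × ℕ) : ℕ × ℕ := if u.1 < n then (u.1 + 1, u.2) else (1, u.2 + 1)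

/-- `π` on values: `k ↦ k+1` for `k < n`, `n ↦ 1`. -/
def piVal (n k : ℕ) : ℕ := if k < n then k + 1 else 1

/-- `π` maps the augmented diagram of `μ` into that of `π(μ)`,
and `v ∈ arm(u)` iff `π(v) ∈ arm(π(u))`. -/
theorem piBox_arm (n : ℕ) (μ : ℕ → ℕ) (hn : 1 ≤ n) :
    (∀ u : ℕ × ℕ, augIn n μ u → augIn n (piComp n μ) (piBox n u)) ∧
    (∀ u v : ℕ × ℕ, dgIn n μ u → augIn n μ v →
      (armIn n μ u v ↔ armIn n (piComp n μ) (piBox n u) (piBox n v))) := by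
  constructor
  · rintro ⟨i, j⟩ ⟨h1, h2, h3⟩
    dsimp only at h1 h2 h3
    by_cases h : i < n
    · simp only [augIn, piBox, piComp, h, if_true]
      refine ⟨by omega, by omega, ?_⟩
      rw [if_neg (by omega), Nat.add_sub_cancel]
      exact h3
    · have hi : i = n := by omega
      subst hi
      simp only [augIn, piBox, piComp, h, if_false]
      exact ⟨le_refl 1, hn, by simp; omega⟩
  · rintro ⟨i, j⟩ ⟨k, l⟩ ⟨hu1, hu2, hu3, hu4⟩ ⟨hv1, hv2, hv3⟩
    dsimp only at *
    by_cases hi : i < n <;> by_cases hk : k < n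
    · have e1 : i + 1 ≠ 1 := by omega
      have e2 : k + 1 ≠ 1 := by omega
      simp only [armIn, piBox, hi, hk, if_true, dgIn, augIn, piComp, e1, e2,
        if_false, Nat.add_sub_cancel]
      omega
    · have : k = n := by omega
      subst this
      have e1 : i + 1 ≠ 1 := by omega
      simp only [armIn, piBox, hi, hk, if_true, if_false, dgIn, augIn, piComp, e1,
        Nat.add_sub_cancel]
      simp only [true_and, and_true, false_and, and_false, if_true]
      omega
    · have : i = n := by omega
      subst this
      have e2 : k + 1 ≠ 1 := by omega
      simp only [armIn, piBox, hi, hk, if_true, if_false, dgIn, augIn, piComp, e2,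
        Nat.add_sub_cancel]
      simp only [true_and, and_true, false_and, and_false, if_true]
      omega
    · have h1 : i = n := by omega
      have h2 : k = n := by omega
      subst h1; subst h2
      simp only [armIn, piBox, hi, if_false, dgIn, augIn, piComp, if_pos rfl]
      simp only [true_and, and_true, false_and, and_false, if_true, false_or]
      rw [false_iff]
      omega
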